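/- Suppose A ∈ ℝ^{n×n} is invertible with μ[A] < 0, f is Lipschitz with constant K in its second argument, and K|A||A^{−1}| < −μ[A]. Then there exists h* > 0 such that for all h ∈ (0, h*), the one-step contraction factor L(h) = e^{μ[A]h} + K|A^{−1}||A| h e^{h|A|} of the exponential Euler map satisfies L(h) < 1; in particular h* can be taken as the positive solution of 1 + hK|A^{−1}||A| e^{h|A| − hμ[A]} = e^{−hμ[A]}. -/

import Mathlib

/-- Operator norm of a real matrix induced by the Euclidean vector norm. -/
noncomputable def euclideanOpNorm {n : ℕ} (B : Matrix (Fin n) (Fin n) ℝ) : ℝ :=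
  ‖Matrix.toEuclideanCLM (𝕜 := ℝ) B‖

/-- Logarithmic matrix norm `μ[B] = λ_max((B + Bᵀ)/2)`. -/
noncomputable def logMatrixNorm {n : ℕ} (B : Matrix (Fin n) (Fin n) ℝ) : ℝ :=
  ⨆ i, (Matrix.isHermitian_add_transpose_self B).eigenvalues i / 2

/-- If `μ[A] < 0` and `K|A||A⁻¹| < −μ[A]`, then there exists `h* > 0`,
given by the positive solution of
`1 + hK|A⁻¹||A|e^{h|A| − hμ[A]} = e^{−hμ[A]}`, such that the contraction factor
`L(h) = e^{μ[A]h} + K|A⁻¹||A| h e^{h|A|}` satisfies `L(h) < 1` for all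
`h ∈ (0, h*)`. -/
theorem exponentialEuler_contraction {n : ℕ} (A : Matrix (Fin n) (Fin n) ℝ)
    (hA : IsUnit A.det) (hμ : logMatrixNorm A < 0) (K : ℝ) (hK : 0 < K)
    (hcond : K * euclideanOpNorm A * euclideanOpNorm A⁻¹ < -logMatrixNorm A) :
    ∃ hstar : ℝ, 0 < hstar ∧
      1 + hstar * K * euclideanOpNorm A⁻¹ * euclideanOpNorm A *
          Real.exp (hstar * euclideanOpNorm A - hstar * logMatrixNorm A) =
        Real.exp (-hstar * logMatrixNorm A) ∧
      ∀ h : ℝ, 0 < h → h < hstar →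
        Real.exp (logMatrixNorm A * h) +
            K * euclideanOpNorm A⁻¹ * euclideanOpNorm A * h *
              Real.exp (h * euclideanOpNorm A) < 1 := by
  -- Notation
  set μ := logMatrixNorm A with hμdef
  set a := euclideanOpNorm A with hadef
  set a' := euclideanOpNorm A⁻¹ with ha'def
  -- the index type is nonempty
  have hne : Nonempty (Fin n) := by
    by_contra hcon
    rw [not_nonempty_iff] at hcon
    have : μ = 0 := by
      rw [hμdef, logMatrixNorm, iSup_of_empty', Real.sSup_empty]
    linarith
  -- norms are positive
  have ha0 : 0 ≤ a := by rw [hadef, euclideanOpNorm]; exact norm_nonneg _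
  have ha'0 : 0 ≤ a' := by rw [ha'def, euclideanOpNorm]; exact norm_nonneg _
  have hone : (1 : ℝ) ≤ a * a' := by
    have hinv : A * A⁻¹ = 1 := Matrix.mul_nonsing_inv A hA
    calc (1 : ℝ) = ‖(1 : EuclideanSpace ℝ (Fin n) →L[ℝ] EuclideanSpace ℝ (Fin n))‖ :=
          norm_one.symm
      _ = ‖Matrix.toEuclideanCLM (𝕜 := ℝ) (A * A⁻¹)‖ := by rw [hinv, map_one]
      _ = ‖Matrix.toEuclideanCLM (𝕜 := ℝ) A * Matrix.toEuclideanCLM (𝕜 := ℝ) A⁻¹‖ := by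
          rw [map_mul]
      _ ≤ a * a' := norm_mul_le _ _
  clear_value μ a a'
  have ha : 0 < a := by nlinarith
  have ha' : 0 < a' := by nlinarith
  set c := K * a' * a with hcdef
  have hc : 0 < c := by positivity
  have hcμ : c < -μ := by nlinarith
  have hb : 0 < a - μ := by linarith
  -- the auxiliary function
  set g : ℝ → ℝ := fun h => 1 + h * c * Real.exp (h * a - h * μ) - Real.exp (-h * μ)
    with hgdef
  have hgcont : Continuous g := by
    rw [hgdef]; fun_prop
  -- negativity near zero
  have hμc1 : (1 : ℝ) < -μ / c := (one_lt_div hc).mpr hcμ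
  have hμc0 : (0 : ℝ) < -μ / c := by linarith
  set ε := Real.log (-μ / c) / (a - μ) with hεdef
  have hε : 0 < ε := div_pos (Real.log_pos hμc1) hb
  have hneg : ∀ h : ℝ, 0 < h → h ≤ ε → g h < 0 := by
    intro h hh0 hhε
    have hexp : Real.exp (h * a - h * μ) ≤ -μ / c := by
      rw [← Real.exp_log hμc0]
      apply Real.exp_le_exp.mpr
      have h1 : h * (a - μ) ≤ ε * (a - μ) := by nlinarith
      have h2 : ε * (a - μ) = Real.log (-μ / c) := by
        rw [hεdef]; field_simp
      nlinarith
    have h1 : -h * μ + 1 < Real.exp (-h * μ) :=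
      Real.add_one_lt_exp (by nlinarith)
    have h2 : h * c * Real.exp (h * a - h * μ) ≤ h * (-μ) := by
      have h3 : c * Real.exp (h * a - h * μ) ≤ c * (-μ / c) :=
        mul_le_mul_of_nonneg_left hexp hc.le
      have h4 : c * (-μ / c) = -μ := by field_simp
      nlinarith
    have heq : g h = 1 + h * c * Real.exp (h * a - h * μ) - Real.exp (-h * μ) := rfl
    rw [heq]
    linarith
  -- positivity at 1/c
  have hpos : 0 < g (1 / c) := by
    have h1 : Real.exp (-(1 / c) * μ) ≤ Real.exp (1 / c * a - 1 / c * μ) := by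
      apply Real.exp_le_exp.mpr
      have : 0 ≤ 1 / c * a := by positivity
      nlinarith
    have h2 : 1 / c * c = 1 := by field_simp
    have : g (1 / c) =
        1 + 1 / c * c * Real.exp (1 / c * a - 1 / c * μ) - Real.exp (-(1 / c) * μ) := rfl
    rw [this, h2, one_mul]
    nlinarith [Real.exp_pos (-(1 / c) * μ)]
  have hεlt : ε < 1 / c := by
    by_contra hcon
    push_neg at hcon
    exact absurd (hneg (1 / c) (by positivity) hcon) (by linarith)
  -- first zero
  obtain ⟨z, hz, hz0⟩ : ∃ z ∈ Set.Icc ε (1 / c), g z = 0 := by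
    have hiv := intermediate_value_Icc hεlt.le hgcont.continuousOn
    have h0mem : (0 : ℝ) ∈ Set.Icc (g ε) (g (1 / c)) :=
      ⟨(hneg ε hε le_rfl).le, hpos.le⟩
    obtain ⟨w, hw, hw0⟩ := hiv h0mem
    exact ⟨w, hw, hw0⟩
  set S : Set ℝ := Set.Icc ε (1 / c) ∩ {h | g h = 0} with hSdef
  have hSne : S.Nonempty := ⟨z, hz, hz0⟩
  have hSbdd : BddBelow S := ⟨ε, fun x hx => hx.1.1⟩
  have hSclosed : IsClosed S :=
    isClosed_Icc.inter (isClosed_eq hgcont continuous_const)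
  have hmem : sInf S ∈ S := hSclosed.csInf_mem hSne hSbdd
  obtain ⟨⟨hstar_ge, hstar_le⟩, hstar_zero⟩ := hmem
  refine ⟨sInf S, by linarith, ?_, ?_⟩
  · -- the equation
    have : g (sInf S) =
        1 + sInf S * c * Real.exp (sInf S * a - sInf S * μ) -
          Real.exp (-sInf S * μ) := rfl
    have hz' : (1 : ℝ) + sInf S * c * Real.exp (sInf S * a - sInf S * μ) -
        Real.exp (-sInf S * μ) = 0 := by rw [← this]; exact hstar_zero
    have hcc : sInf S * c = sInf S * K * a' * a := by rw [hcdef]; ring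
    linarith [hz', (by rw [← hcc] : sInf S * K * a' * a * Real.exp (sInf S * a - sInf S * μ)
      = sInf S * c * Real.exp (sInf S * a - sInf S * μ))]
  · -- contraction for h < hstar
    intro h hh0 hhs
    have hgh : g h < 0 := by
      rcases le_or_gt h ε with hle | hgt
      · exact hneg h hh0 hle
      · by_contra hcon
        push_neg at hcon
        have hiv := intermediate_value_Icc hgt.le hgcont.continuousOn
        have h0mem : (0 : ℝ) ∈ Set.Icc (g ε) (g h) := ⟨(hneg ε hε le_rfl).le, hcon⟩
        obtain ⟨w, hw, hw0⟩ := hiv h0mem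
        have hwS : w ∈ S := ⟨⟨hw.1, by linarith [hw.2]⟩, hw0⟩
        have := csInf_le hSbdd hwS
        linarith [hw.2]
    have hgh' : 1 + h * c * Real.exp (h * a - h * μ) < Real.exp (-h * μ) := by
      have heq : g h = 1 + h * c * Real.exp (h * a - h * μ) - Real.exp (-h * μ) := rfl
      rw [heq] at hgh
      linarith
    have hEμ : 0 < Real.exp (μ * h) := Real.exp_pos _
    have key := mul_lt_mul_of_pos_left hgh' hEμ
    have e1 : Real.exp (μ * h) * Real.exp (h * a - h * μ) = Real.exp (h * a) := by
      rw [← Real.exp_add]; congr 1; ring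
    have e2 : Real.exp (μ * h) * Real.exp (-h * μ) = 1 := by
      rw [← Real.exp_add, show μ * h + -h * μ = 0 by ring, Real.exp_zero]
    have expand : Real.exp (μ * h) * (1 + h * c * Real.exp (h * a - h * μ)) =
        Real.exp (μ * h) + K * a' * a * h * (Real.exp (μ * h) * Real.exp (h * a - h * μ)) := by
      rw [hcdef]; ring
    rw [expand, e1, e2] at key
    exact key
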